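/- Let α, β : ℝ → (0,∞) be differentiable and s₁, s₂ ≥ 0. For each x, the vector λ(x) = (1/(4(α+β))) · ( (s₂α'−s₁β')/α, −(s₂α'−s₁β')/α, −(s₂α'+s₁β')/β, (s₂α'+s₁β')/β ) − ((α'+β')/(4(α+β)²)) · ( (s₂α−s₁β)/α, −(s₂α−s₁β)/α, −(s₂α+s₁β)/β, (s₂α+s₁β)/β ) (all functions evaluated at x, with α' = dα/dx, β' = dβ/dx) is the unique vector in ℝ⁴ whose components sum to zero and which satisfies Q(α(x),β(x)) λ(x) = Λ (d/dx) 𝓔(α(x),β(x)); moreover the resulting drift U := s₁λ₁ − s₁λ₂ + s₂λ₃ − s₂λ₄ equals [ s₂(s₁β−s₂α)α' − s₁(s₂α+s₁β)β' ] / (2(α+β)αβ) + (s₂²α² + s₁²β²)(α'+β') / (2(α+β)²αβ). -/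

import Mathlib

set_option maxHeartbeats 1000000 in
/-- For differentiable positive rates `α, β : ℝ → (0,∞)` and speeds
`s₁, s₂ ≥ 0`, the explicit vector `λ(x)` is the unique vector in `ℝ⁴` whose components
sum to zero and which satisfies `Q(α(x),β(x)) λ(x) = Λ (d/dx) 𝓔(α(x),β(x))`; the
resulting drift `U = s₁λ₁ − s₁λ₂ + s₂λ₃ − s₂λ₄` equals
`[s₂(s₁β−s₂α)α' − s₁(s₂α+s₁β)β']/(2(α+β)αβ) + (s₂²α² + s₁²β²)(α'+β')/(2(α+β)²αβ)`. -/
theorem ncs1_lambda_and_drift (α β : ℝ → ℝ) (s₁ s₂ : ℝ)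
    (hα : Differentiable ℝ α) (hβ : Differentiable ℝ β)
    (hαpos : ∀ x, 0 < α x) (hβpos : ∀ x, 0 < β x)
    (hs₁ : 0 ≤ s₁) (hs₂ : 0 ≤ s₂) (x : ℝ) :
    let Q : Matrix (Fin 4) (Fin 4) ℝ :=
      !![-(α x), 0, 0, β x;
         0, -(α x), β x, 0;
         α x, 0, -(β x), 0;
         0, α x, 0, -(β x)]
    -- Λ (d/dx) 𝓔(α(x),β(x)) with 𝓔 = (β,β,α,α)/(2(α+β)) and Λ = diag(s₁,−s₁,s₂,−s₂)
    let T : Fin 4 → ℝ :=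
      ![s₁ * deriv (fun y => β y / (2 * (α y + β y))) x,
        -(s₁ * deriv (fun y => β y / (2 * (α y + β y))) x),
        s₂ * deriv (fun y => α y / (2 * (α y + β y))) x,
        -(s₂ * deriv (fun y => α y / (2 * (α y + β y))) x)]
    let lam : Fin 4 → ℝ :=
      (4 * (α x + β x))⁻¹ •
        ![(s₂ * deriv α x - s₁ * deriv β x) / α x,
          -((s₂ * deriv α x - s₁ * deriv β x) / α x),
          -((s₂ * deriv α x + s₁ * deriv β x) / β x),
          (s₂ * deriv α x + s₁ * deriv β x) / β x]
      - ((deriv α x + deriv β x) / (4 * (α x + β x) ^ 2)) •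
        ![(s₂ * α x - s₁ * β x) / α x,
          -((s₂ * α x - s₁ * β x) / α x),
          -((s₂ * α x + s₁ * β x) / β x),
          (s₂ * α x + s₁ * β x) / β x]
    (lam 0 + lam 1 + lam 2 + lam 3 = 0) ∧
    Q.mulVec lam = T ∧
    (∀ y : Fin 4 → ℝ, y 0 + y 1 + y 2 + y 3 = 0 → Q.mulVec y = T → y = lam) ∧
    s₁ * lam 0 - s₁ * lam 1 + s₂ * lam 2 - s₂ * lam 3
      = (s₂ * (s₁ * β x - s₂ * α x) * deriv α x
          - s₁ * (s₂ * α x + s₁ * β x) * deriv β x)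
          / (2 * (α x + β x) * α x * β x)
        + (s₂ ^ 2 * (α x) ^ 2 + s₁ ^ 2 * (β x) ^ 2)
          / (2 * (α x + β x) ^ 2 * α x * β x) * (deriv α x + deriv β x) := by
  intro Q T lam
  have ha := hαpos x
  have hb := hβpos x
  have ha' : α x ≠ 0 := ne_of_gt ha
  have hb' : β x ≠ 0 := ne_of_gt hb
  have hab : α x + β x ≠ 0 := ne_of_gt (by linarith)
  have hden : HasDerivAt (fun y => 2 * (α y + β y)) (2 * (deriv α x + deriv β x)) x :=
    (((hα x).hasDerivAt.add (hβ x).hasDerivAt)).const_mul 2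
  have hden0 : 2 * (α x + β x) ≠ 0 := by positivity
  have h1 : deriv (fun y => β y / (2 * (α y + β y))) x
      = (deriv β x * (2 * (α x + β x)) - β x * (2 * (deriv α x + deriv β x)))
          / (2 * (α x + β x)) ^ 2 :=
    ((hβ x).hasDerivAt.div hden hden0).deriv
  have h2 : deriv (fun y => α y / (2 * (α y + β y))) x
      = (deriv α x * (2 * (α x + β x)) - α x * (2 * (deriv α x + deriv β x)))
          / (2 * (α x + β x)) ^ 2 :=
    ((hα x).hasDerivAt.div hden hden0).deriv
  have L0 : lam 0 = (4 * (α x + β x))⁻¹ * ((s₂ * deriv α x - s₁ * deriv β x) / α x)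
      - (deriv α x + deriv β x) / (4 * (α x + β x) ^ 2) * ((s₂ * α x - s₁ * β x) / α x) := by
    simp [lam]
  have L1 : lam 1 = -((4 * (α x + β x))⁻¹ * ((s₂ * deriv α x - s₁ * deriv β x) / α x))
      + (deriv α x + deriv β x) / (4 * (α x + β x) ^ 2) * ((s₂ * α x - s₁ * β x) / α x) := by
    simp [lam]
  have L2 : lam 2 = -((4 * (α x + β x))⁻¹ * ((s₂ * deriv α x + s₁ * deriv β x) / β x))
      + (deriv α x + deriv β x) / (4 * (α x + β x) ^ 2) * ((s₂ * α x + s₁ * β x) / β x) := by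
    simp [lam]
  have L3 : lam 3 = (4 * (α x + β x))⁻¹ * ((s₂ * deriv α x + s₁ * deriv β x) / β x)
      - (deriv α x + deriv β x) / (4 * (α x + β x) ^ 2) * ((s₂ * α x + s₁ * β x) / β x) := by
    simp [lam]
  have hQmv : ∀ v : Fin 4 → ℝ, Q.mulVec v
      = ![-(α x) * v 0 + β x * v 3, -(α x) * v 1 + β x * v 2,
          α x * v 0 - β x * v 2, α x * v 1 - β x * v 3] := by
    intro v
    funext i
    fin_cases i <;>
      simp [Q, Matrix.mulVec, dotProduct, Fin.sum_univ_four] <;> ring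
  have hsum : lam 0 + lam 1 + lam 2 + lam 3 = 0 := by
    rw [L0, L1, L2, L3]; ring
  have hmain : Q.mulVec lam = T := by
    rw [hQmv]
    funext i
    fin_cases i
    · show -(α x) * lam 0 + β x * lam 3 = T 0
      rw [L0, L3]; simp only [T, Matrix.cons_val_zero, h1]; field_simp; ring
    · show -(α x) * lam 1 + β x * lam 2 = T 1
      rw [L1, L2]
      simp only [T, Matrix.cons_val_one, Matrix.head_cons, Matrix.cons_val_zero, h1]; field_simp; ring
    · show α x * lam 0 - β x * lam 2 = T 2
      rw [L0, L2]
      simp only [T, Matrix.cons_val_two, Matrix.tail_cons, Matrix.head_cons, h2]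
      field_simp; ring
    · show α x * lam 1 - β x * lam 3 = T 3
      rw [L1, L3]
      simp only [T, Matrix.cons_val_three, Matrix.tail_cons, Matrix.head_cons, h2]
      field_simp; ring
  refine ⟨hsum, hmain, ?_, ?_⟩
  · intro y hy0 hyQ
    have h' : Q.mulVec y = Q.mulVec lam := by rw [hyQ, hmain]
    rw [hQmv, hQmv] at h'
    have e0 : -(α x) * y 0 + β x * y 3 = -(α x) * lam 0 + β x * lam 3 := by
      have := congrFun h' 0; simpa using this
    have e1 : -(α x) * y 1 + β x * y 2 = -(α x) * lam 1 + β x * lam 2 := by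
      have := congrFun h' 1; simpa using this
    have e2 : α x * y 0 - β x * y 2 = α x * lam 0 - β x * lam 2 := by
      have := congrFun h' 2; simpa using this
    have hc : 2 * α x * (α x + β x) ≠ 0 := by positivity
    have h00 : y 0 = lam 0 := by
      refine mul_left_cancel₀ hc ?_
      linear_combination (-(α x)) * e0 + β x * e1 + (α x + β x) * e2
        + α x * β x * hy0 - α x * β x * hsum
    have h33 : y 3 = lam 3 := by
      refine mul_left_cancel₀ hb' ?_
      linear_combination e0 + α x * h00
    have h22 : y 2 = lam 2 := by
      refine mul_left_cancel₀ hb' ?_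
      linear_combination -e2 + α x * h00
    have h11 : y 1 = lam 1 := by
      refine mul_left_cancel₀ ha' ?_
      linear_combination -e1 + β x * h22
    funext i
    fin_cases i
    · exact h00
    · exact h11
    · exact h22
    · exact h33
  · rw [L0, L1, L2, L3]
    field_simp
    ring
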